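/- Let g(F, M_s) = ν(1-ν)β_E²ν_E²F² / (α(F)((1-ν)ν_E β_E F + α(F)δ_M γ_s M_s)) for F > 0 and g(0, M_s) = 0, where α(F) = β_E F/k + ν_E + δ_E and all parameters β_E, ν_E, δ_E, δ_M, γ_s, k > 0, ν ∈ (0,1). Then g is globally Lipschitz-continuous on [0,∞) × [0,∞). -/

import Mathlib

noncomputable def gfun (bE nE dE dM gs k nu : ℝ) (F Ms : ℝ) : ℝ :=
  if 0 < F then
    nu * (1 - nu) * bE ^ 2 * nE ^ 2 * F ^ 2 /
      ((bE * F / k + nE + dE) *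
        ((1 - nu) * nE * bE * F + (bE * F / k + nE + dE) * dM * gs * Ms))
  else 0

section aux

variable {bE nE dE dM gs k nu : ℝ}
  (hbE : 0 < bE) (hnE : 0 < nE) (hdE : 0 < dE) (hdM : 0 < dM)
  (hgs : 0 < gs) (hk : 0 < k) (hnu0 : 0 < nu) (hnu1 : nu < 1)

include hbE hnE hdE hdM hgs hk hnu0 hnu1

/-- nonnegativity of gfun -/
lemma gfun_nonneg (F M : ℝ) (hM : 0 ≤ M) : 0 ≤ gfun bE nE dE dM gs k nu F M := by
  unfold gfun
  split
  · rename_i hF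
    have h1 : (0:ℝ) < 1 - nu := by linarith
    positivity
  · exact le_rfl

/-- bound gfun ≤ L1 * F for F > 0 -/
lemma gfun_le (F M : ℝ) (hF : 0 < F) (hM : 0 ≤ M) :
    gfun bE nE dE dM gs k nu F M ≤
      3 * (nu * (1 - nu) * bE ^ 2 * nE ^ 2) / ((nE + dE) * ((1 - nu) * nE * bE)) * F := by
  have h1 : (0:ℝ) < 1 - nu := by linarith
  have ha : 0 < bE * F / k + nE + dE := by positivity
  have hq : 0 < (1 - nu) * nE * bE * F + (bE * F / k + nE + dE) * dM * gs * M := by positivity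
  have ham : nE + dE ≤ bE * F / k + nE + dE := by
    have : 0 ≤ bE * F / k := by positivity
    linarith
  have hqA : (1 - nu) * nE * bE * F ≤
      (1 - nu) * nE * bE * F + (bE * F / k + nE + dE) * dM * gs * M := by
    have : 0 ≤ (bE * F / k + nE + dE) * dM * gs * M := by positivity
    linarith
  rw [gfun, if_pos hF, div_le_iff₀ (by positivity)]
  rw [div_mul_eq_mul_div, div_mul_eq_mul_div, le_div_iff₀ (by positivity)]
  have key : (nE + dE) * ((1 - nu) * nE * bE * F) ≤
      (bE * F / k + nE + dE) *
        ((1 - nu) * nE * bE * F + (bE * F / k + nE + dE) * dM * gs * M) := by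
    calc (nE + dE) * ((1 - nu) * nE * bE * F)
        ≤ (bE * F / k + nE + dE) * ((1 - nu) * nE * bE * F) :=
          mul_le_mul_of_nonneg_right ham (by positivity)
      _ ≤ _ := mul_le_mul_of_nonneg_left hqA ha.le
  nlinarith [mul_le_mul_of_nonneg_left key
    (by positivity : (0:ℝ) ≤ nu * (1 - nu) * bE ^ 2 * nE ^ 2 * F),
    mul_nonneg (by positivity : (0:ℝ) ≤ nu * (1 - nu) * bE ^ 2 * nE ^ 2 * F)
      (mul_pos ha hq).le]


set_option maxHeartbeats 2000000 in
/-- Lipschitz in F for both positive -/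
lemma gfun_lipF (F F' M : ℝ) (hF : 0 < F) (hF' : 0 < F') (hM : 0 ≤ M) :
    |gfun bE nE dE dM gs k nu F M - gfun bE nE dE dM gs k nu F' M| ≤
      3 * (nu * (1 - nu) * bE ^ 2 * nE ^ 2) / ((nE + dE) * ((1 - nu) * nE * bE)) * |F - F'| := by
  have h1 : (0:ℝ) < 1 - nu := by linarith
  have ha : 0 < bE * F / k + nE + dE := by positivity
  have hap : 0 < bE * F' / k + nE + dE := by positivity
  have hq : 0 < (1 - nu) * nE * bE * F + (bE * F / k + nE + dE) * dM * gs * M := by positivity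
  have hqp : 0 < (1 - nu) * nE * bE * F' + (bE * F' / k + nE + dE) * dM * gs * M := by positivity
  set c := nu * (1 - nu) * bE ^ 2 * nE ^ 2 with hcdef
  set a := bE * F / k + nE + dE with hadef
  set ap := bE * F' / k + nE + dE with hapdef
  set q := (1 - nu) * nE * bE * F + a * dM * gs * M with hqdef
  set qp := (1 - nu) * nE * bE * F' + ap * dM * gs * M with hqpdef
  have hc : 0 < c := by rw [hcdef]; positivity
  have hm : (0:ℝ) < nE + dE := by positivity
  have hA : (0:ℝ) < (1 - nu) * nE * bE := by positivity
  have ham : nE + dE ≤ a := by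
    have : 0 ≤ bE * F / k := by positivity
    rw [hadef]; linarith
  have hapm : nE + dE ≤ ap := by
    have : 0 ≤ bE * F' / k := by positivity
    rw [hapdef]; linarith
  have hBM : 0 ≤ dM * gs * M := by positivity
  have hqA : (1 - nu) * nE * bE * F ≤ q := by
    have : 0 ≤ a * dM * gs * M := by positivity
    rw [hqdef]; linarith
  have hqpA : (1 - nu) * nE * bE * F' ≤ qp := by
    have : 0 ≤ ap * dM * gs * M := by positivity
    rw [hqpdef]; linarith
  have hqB : a * (dM * gs * M) ≤ q := by
    have h0 : 0 ≤ (1 - nu) * nE * bE * F := by positivity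
    rw [hqdef]; nlinarith
  have hqpB : ap * (dM * gs * M) ≤ qp := by
    have h0 : 0 ≤ (1 - nu) * nE * bE * F' := by positivity
    rw [hqpdef]; nlinarith
  have heq : gfun bE nE dE dM gs k nu F M - gfun bE nE dE dM gs k nu F' M =
      c * (nE + dE) * (F - F') *
        ((1 - nu) * nE * bE * F * F' + dM * gs * M * (F * ap + F' * a)) / (a * q * (ap * qp)) := by
    rw [gfun, gfun, if_pos hF, if_pos hF']
    rw [hcdef, hadef, hapdef, hqdef, hqpdef, hadef, hapdef]
    field_simp
    ring
  set Np := (1 - nu) * nE * bE * F * F' + dM * gs * M * (F * ap + F' * a) with hNpdef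
  have hNp : 0 ≤ Np := by rw [hNpdef]; positivity
  have hD : 0 < a * q * (ap * qp) := by positivity
  rw [heq, abs_div, abs_of_pos hD]
  have habs : |c * (nE + dE) * (F - F') * Np| = c * (nE + dE) * Np * |F - F'| := by
    rw [abs_mul, abs_mul, abs_mul, abs_of_pos hc, abs_of_pos hm, abs_of_nonneg hNp]
    ring
  rw [habs, div_le_iff₀ hD]
  -- the three product bounds
  have e1 : (nE + dE) * ((1 - nu) * nE * bE * F) * ((nE + dE) * ((1 - nu) * nE * bE * F')) ≤
      a * q * (ap * qp) := by
    have u1 : (nE + dE) * ((1 - nu) * nE * bE * F) ≤ a * q :=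
      mul_le_mul ham hqA (by positivity) ha.le
    have u2 : (nE + dE) * ((1 - nu) * nE * bE * F') ≤ ap * qp :=
      mul_le_mul hapm hqpA (by positivity) hap.le
    exact mul_le_mul u1 u2 (by positivity) (by positivity)
  have e2 : (nE + dE) * ((1 - nu) * nE * bE * F) * ((nE + dE) * (dM * gs * M) * ap) ≤
      a * q * (ap * qp) := by
    have u1 : (nE + dE) * ((1 - nu) * nE * bE * F) ≤ a * q :=
      mul_le_mul ham hqA (by positivity) ha.le
    have u2 : (nE + dE) * (dM * gs * M) * ap ≤ ap * qp := by
      have : (nE + dE) * (dM * gs * M) ≤ ap * (dM * gs * M) :=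
        mul_le_mul_of_nonneg_right hapm hBM
      calc (nE + dE) * (dM * gs * M) * ap ≤ ap * (dM * gs * M) * ap :=
            mul_le_mul_of_nonneg_right this hap.le
        _ ≤ ap * qp := by nlinarith [mul_le_mul_of_nonneg_left hqpB hap.le]
    exact mul_le_mul u1 u2 (by positivity) (by positivity)
  have e3 : (nE + dE) * ((1 - nu) * nE * bE * F') * ((nE + dE) * (dM * gs * M) * a) ≤
      a * q * (ap * qp) := by
    have u1 : (nE + dE) * ((1 - nu) * nE * bE * F') ≤ ap * qp :=
      mul_le_mul hapm hqpA (by positivity) hap.le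
    have u2 : (nE + dE) * (dM * gs * M) * a ≤ a * q := by
      have : (nE + dE) * (dM * gs * M) ≤ a * (dM * gs * M) :=
        mul_le_mul_of_nonneg_right ham hBM
      calc (nE + dE) * (dM * gs * M) * a ≤ a * (dM * gs * M) * a :=
            mul_le_mul_of_nonneg_right this ha.le
        _ ≤ a * q := by nlinarith [mul_le_mul_of_nonneg_left hqB ha.le]
    calc (nE + dE) * ((1 - nu) * nE * bE * F') * ((nE + dE) * (dM * gs * M) * a)
        = (nE + dE) * (dM * gs * M) * a * ((nE + dE) * ((1 - nu) * nE * bE * F')) := by ring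
      _ ≤ a * q * (ap * qp) := mul_le_mul u2 u1 (by positivity) (by positivity)
  have hL : c * (nE + dE) * Np * ((nE + dE) * ((1 - nu) * nE * bE)) ≤
      3 * c * (a * q * (ap * qp)) := by
    rw [hNpdef]
    linear_combination (mul_le_mul_of_nonneg_left e1 hc.le) + (mul_le_mul_of_nonneg_left e2 hc.le) +
      (mul_le_mul_of_nonneg_left e3 hc.le)
  have h2 : c * (nE + dE) * Np ≤ 3 * c * (a * q * (ap * qp)) / ((nE + dE) * ((1 - nu) * nE * bE)) := by
    rw [le_div_iff₀ (by positivity)]; linarith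
  calc c * (nE + dE) * Np * |F - F'|
      ≤ 3 * c * (a * q * (ap * qp)) / ((nE + dE) * ((1 - nu) * nE * bE)) * |F - F'| :=
        mul_le_mul_of_nonneg_right h2 (abs_nonneg _)
    _ = 3 * c / ((nE + dE) * ((1 - nu) * nE * bE)) * |F - F'| * (a * q * (ap * qp)) := by
        ring

/-- Lipschitz in M for F positive -/
lemma gfun_lipM (F M M' : ℝ) (hF : 0 < F) (hM : 0 ≤ M) (hM' : 0 ≤ M') :
    |gfun bE nE dE dM gs k nu F M - gfun bE nE dE dM gs k nu F M'| ≤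
      nu * (1 - nu) * bE ^ 2 * nE ^ 2 * (dM * gs) / ((1 - nu) * nE * bE) ^ 2 * |M - M'| := by
  have h1 : (0:ℝ) < 1 - nu := by linarith
  have ha : 0 < bE * F / k + nE + dE := by positivity
  have hq : 0 < (1 - nu) * nE * bE * F + (bE * F / k + nE + dE) * dM * gs * M := by positivity
  have hqp : 0 < (1 - nu) * nE * bE * F + (bE * F / k + nE + dE) * dM * gs * M' := by positivity
  set c := nu * (1 - nu) * bE ^ 2 * nE ^ 2 with hcdef
  set a := bE * F / k + nE + dE with hadef
  set q := (1 - nu) * nE * bE * F + a * dM * gs * M with hqdef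
  set qp := (1 - nu) * nE * bE * F + a * dM * gs * M' with hqpdef
  have hc : 0 < c := by rw [hcdef]; positivity
  have hqA : (1 - nu) * nE * bE * F ≤ q := by
    have : 0 ≤ a * dM * gs * M := by positivity
    rw [hqdef]; linarith
  have hqpA : (1 - nu) * nE * bE * F ≤ qp := by
    have : 0 ≤ a * dM * gs * M' := by positivity
    rw [hqpdef]; linarith
  have heq : gfun bE nE dE dM gs k nu F M - gfun bE nE dE dM gs k nu F M' =
      c * F ^ 2 * (dM * gs) * (M' - M) / (q * qp) := by
    rw [gfun, gfun, if_pos hF, if_pos hF]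
    rw [hcdef, hqdef, hqpdef, hadef]
    field_simp
    ring
  have hDq : 0 < q * qp := by positivity
  rw [heq, abs_div, abs_of_pos hDq]
  have habs : |c * F ^ 2 * (dM * gs) * (M' - M)| = c * F ^ 2 * (dM * gs) * |M - M'| := by
    rw [abs_mul, abs_of_nonneg (by positivity : (0:ℝ) ≤ c * F ^ 2 * (dM * gs)), abs_sub_comm]
  rw [habs, div_le_iff₀ hDq]
  have eA : ((1 - nu) * nE * bE * F) * ((1 - nu) * nE * bE * F) ≤ q * qp :=
    mul_le_mul hqA hqpA (by positivity) hq.le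
  have h2 : c * F ^ 2 * (dM * gs) ≤ c * (dM * gs) / ((1 - nu) * nE * bE) ^ 2 * (q * qp) := by
    rw [div_mul_eq_mul_div, le_div_iff₀ (by positivity)]
    nlinarith [mul_le_mul_of_nonneg_left eA (by positivity : (0:ℝ) ≤ c * (dM * gs))]
  calc c * F ^ 2 * (dM * gs) * |M - M'|
      ≤ c * (dM * gs) / ((1 - nu) * nE * bE) ^ 2 * (q * qp) * |M - M'| :=
        mul_le_mul_of_nonneg_right h2 (abs_nonneg _)
    _ = c * (dM * gs) / ((1 - nu) * nE * bE) ^ 2 * |M - M'| * (q * qp) := by ring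

end aux

theorem stmt_0 (bE nE dE dM gs k nu : ℝ)
    (hbE : 0 < bE) (hnE : 0 < nE) (hdE : 0 < dE) (hdM : 0 < dM)
    (hgs : 0 < gs) (hk : 0 < k) (hnu : nu ∈ Set.Ioo (0:ℝ) 1) :
    ∃ L : NNReal, LipschitzOnWith L
      (fun p : ℝ × ℝ => gfun bE nE dE dM gs k nu p.1 p.2)
      (Set.Ici (0:ℝ) ×ˢ Set.Ici (0:ℝ)) := by
  obtain ⟨hnu0, hnu1⟩ := hnu
  have h1 : (0:ℝ) < 1 - nu := by linarith
  set g := gfun bE nE dE dM gs k nu with hg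
  set L1 := 3 * (nu * (1 - nu) * bE ^ 2 * nE ^ 2) / ((nE + dE) * ((1 - nu) * nE * bE)) with hL1def
  set L2 := nu * (1 - nu) * bE ^ 2 * nE ^ 2 * (dM * gs) / ((1 - nu) * nE * bE) ^ 2 with hL2def
  have hL1 : 0 ≤ L1 := by rw [hL1def]; positivity
  have hL2 : 0 ≤ L2 := by rw [hL2def]; positivity
  have hg0 : ∀ M : ℝ, g 0 M = 0 := fun M => if_neg (lt_irrefl 0)
  have stepF : ∀ x y M : ℝ, 0 ≤ x → 0 ≤ y → 0 ≤ M → |g x M - g y M| ≤ L1 * |x - y| := by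
    intro x y M hx hy hM
    rcases hx.lt_or_eq with hx | hx <;> rcases hy.lt_or_eq with hy | hy
    · exact gfun_lipF hbE hnE hdE hdM hgs hk hnu0 hnu1 x y M hx hy hM
    · rw [← hy, hg0, sub_zero, abs_of_nonneg (gfun_nonneg hbE hnE hdE hdM hgs hk hnu0 hnu1 x M hM),
        sub_zero, abs_of_pos hx]
      exact gfun_le hbE hnE hdE hdM hgs hk hnu0 hnu1 x M hx hM
    · rw [← hx, hg0, zero_sub, abs_neg,
        abs_of_nonneg (gfun_nonneg hbE hnE hdE hdM hgs hk hnu0 hnu1 y M hM),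
        zero_sub, abs_neg, abs_of_pos hy]
      exact gfun_le hbE hnE hdE hdM hgs hk hnu0 hnu1 y M hy hM
    · rw [← hx, ← hy, hg0, sub_self, abs_zero]
      positivity
  have stepM : ∀ x M M' : ℝ, 0 ≤ x → 0 ≤ M → 0 ≤ M' → |g x M - g x M'| ≤ L2 * |M - M'| := by
    intro x M M' hx hM hM'
    rcases hx.lt_or_eq with hx | hx
    · exact gfun_lipM hbE hnE hdE hdM hgs hk hnu0 hnu1 x M M' hx hM hM'
    · rw [← hx, hg0, hg0, sub_self, abs_zero]
      positivity
  refine ⟨Real.toNNReal (L1 + L2), LipschitzOnWith.of_dist_le_mul fun p hp q hq => ?_⟩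
  obtain ⟨hp1, hp2⟩ := hp
  obtain ⟨hq1, hq2⟩ := hq
  simp only [Set.mem_Ici] at hp1 hp2 hq1 hq2
  rw [Real.coe_toNNReal _ (by positivity)]
  have hd1 : |p.1 - q.1| ≤ dist p q := by
    rw [Prod.dist_eq, ← Real.dist_eq]; exact le_max_left _ _
  have hd2 : |p.2 - q.2| ≤ dist p q := by
    rw [Prod.dist_eq, ← Real.dist_eq]; exact le_max_right _ _
  calc dist (g p.1 p.2) (g q.1 q.2) = |g p.1 p.2 - g q.1 q.2| := Real.dist_eq _ _
    _ ≤ |g p.1 p.2 - g q.1 p.2| + |g q.1 p.2 - g q.1 q.2| := abs_sub_le _ _ _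
    _ ≤ L1 * |p.1 - q.1| + L2 * |p.2 - q.2| :=
        add_le_add (stepF p.1 q.1 p.2 hp1 hq1 hp2) (stepM q.1 p.2 q.2 hq1 hp2 hq2)
    _ ≤ L1 * dist p q + L2 * dist p q :=
        add_le_add (mul_le_mul_of_nonneg_left hd1 hL1) (mul_le_mul_of_nonneg_left hd2 hL2)
    _ = (L1 + L2) * dist p q := by ring
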